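/- Let X be a cubespace with the glueing property and s ≥ 0. Then the relation ∼_s (x ∼_s y iff the configuration which is x at all vertices of {0,1}^{s+1} except the top vertex and y at the top vertex is an (s+1)-cube) is an equivalence relation on X. -/

import Mathlib

/-- A morphism of discrete cubes `{0,1}^k → {0,1}^ℓ`: each coordinate function is
identically `0`, identically `1`, equal to `ω_j`, or equal to `1 - ω_j`. -/
def IsCubeMorphism {k l : ℕ} (ρ : (Fin k → Bool) → (Fin l → Bool)) : Prop :=
  ∀ i : Fin l, (∀ ω, ρ ω i = false) ∨ (∀ ω, ρ ω i = true) ∨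
    (∃ j, ∀ ω, ρ ω i = ω j) ∨ (∃ j, ∀ ω, ρ ω i = !(ω j))

/-- A cubespace: a set `X` with cube sets `C^k(X) ⊆ X^{{0,1}^k}`, with `C^0(X) = X`,
closed under precomposition with morphisms of discrete cubes. -/
structure Cubespace (X : Type*) where
  C : ∀ k : ℕ, Set ((Fin k → Bool) → X)
  C_zero : C 0 = Set.univ
  C_morph : ∀ {k l : ℕ} (ρ : (Fin k → Bool) → (Fin l → Bool)),
    IsCubeMorphism ρ → ∀ c ∈ C l, (c ∘ ρ) ∈ C k

/-- The top vertex `(1,…,1)` of the discrete cube `{0,1}^k`. -/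
def topVert (k : ℕ) : Fin k → Bool := fun _ => true

/-- An `(n+1)`-corner: a configuration whose restriction to every lower
codimension-1 face is an `n`-cube (the value at the top vertex is irrelevant). -/
def IsCubeCorner {X : Type*} (CS : Cubespace X) (n : ℕ) (lam : (Fin (n + 1) → Bool) → X) : Prop :=
  ∀ i : Fin (n + 1), (fun ω : Fin n → Bool => lam (i.insertNth false ω)) ∈ CS.C n

/-- `(n+1)`-completion: every `(n+1)`-corner can be completed to an `(n+1)`-cube. -/
def HasCompletion {X : Type*} (CS : Cubespace X) (n : ℕ) : Prop :=
  ∀ lam : (Fin (n + 1) → Bool) → X, IsCubeCorner CS n lam →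
    ∃ x : X, (fun ω => if ω = topVert (n + 1) then x else lam ω) ∈ CS.C (n + 1)

/-- `k`-uniqueness: two `k`-cubes agreeing at all vertices except the top vertex are equal. -/
def HasUniqueness {X : Type*} (CS : Cubespace X) (k : ℕ) : Prop :=
  ∀ c ∈ CS.C k, ∀ c' ∈ CS.C k, (∀ ω, ω ≠ topVert k → c ω = c' ω) → c = c'

/-- The glueing property: two `(n+1)`-cubes agreeing along a common codimension-1 face
can be glued to form another `(n+1)`-cube. -/
def HasGlueing {X : Type*} (CS : Cubespace X) : Prop :=
  ∀ (n : ℕ) (c c' : (Fin (n + 1) → Bool) → X), c ∈ CS.C (n + 1) → c' ∈ CS.C (n + 1) →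
    (∀ ω : Fin n → Bool, c (Fin.snoc ω true) = c' (Fin.snoc ω false)) →
    (fun ω : Fin (n + 1) → Bool => if ω (Fin.last n) = true then c' ω else c ω) ∈ CS.C (n + 1)

/-- A cubespace morphism: maps `k`-cubes to `k`-cubes for every `k`. -/
def IsMorphism {X Y : Type*} (CX : Cubespace X) (CY : Cubespace Y) (f : X → Y) : Prop :=
  ∀ k : ℕ, ∀ c ∈ CX.C k, (fun ω => f (c ω)) ∈ CY.C k

/-- A fibration: a cubespace morphism such that every corner of `X` lying over
(all but the top vertex of) a cube of `Y` can be completed to a cube of `X`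
mapping onto that cube.  (The `k = 0` case of corner completion is surjectivity.) -/
def IsFibration {X Y : Type*} (CX : Cubespace X) (CY : Cubespace Y) (f : X → Y) : Prop :=
  IsMorphism CX CY f ∧ Function.Surjective f ∧
  ∀ (n : ℕ) (lam : (Fin (n + 1) → Bool) → X) (c : (Fin (n + 1) → Bool) → Y),
    IsCubeCorner CX n lam → c ∈ CY.C (n + 1) →
    (∀ ω, ω ≠ topVert (n + 1) → f (lam ω) = c ω) →
    ∃ x : X, f x = c (topVert (n + 1)) ∧
      (fun ω => if ω = topVert (n + 1) then x else lam ω) ∈ CX.C (n + 1)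


section SimEquivAux

variable {X : Type*}

open Function

lemma cube_mem_of_eq {k : ℕ} (CS : Cubespace X) {f g : (Fin k → Bool) → X}
    (hf : f ∈ CS.C k) (h : ∀ ω, f ω = g ω) : g ∈ CS.C k := by
  have : f = g := funext h
  rwa [this] at hf

lemma const_mem_cube (CS : Cubespace X) (k : ℕ) (x : X) :
    (fun _ : Fin k → Bool => x) ∈ CS.C k := by
  have h0 : (fun _ : Fin 0 → Bool => x) ∈ CS.C 0 := by rw [CS.C_zero]; trivial
  have hρ : IsCubeMorphism (fun _ : Fin k → Bool => (Fin.elim0 : Fin 0 → Bool)) :=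
    fun i => i.elim0
  exact CS.C_morph _ hρ _ h0

/-- Gluing along an arbitrary coordinate `i`, derived from gluing along the last
coordinate by conjugating with the transposition swapping `i` and `Fin.last n`. -/
lemma glue_at (CS : Cubespace X) (hglue : HasGlueing CS) {n : ℕ} (i : Fin (n + 1))
    {c c' : (Fin (n + 1) → Bool) → X} (hc : c ∈ CS.C (n + 1)) (hc' : c' ∈ CS.C (n + 1))
    (hmatch : ∀ ω, c (Function.update ω i true) = c' (Function.update ω i false)) :
    (fun ω => if ω i = true then c' ω else c ω) ∈ CS.C (n + 1) := by
  classical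
  set e := Equiv.swap i (Fin.last n) with he
  have hei : e i = Fin.last n := Equiv.swap_apply_left _ _
  have hel : e (Fin.last n) = i := Equiv.swap_apply_right _ _
  have hee : ∀ j, e (e j) = j := fun j => Equiv.swap_apply_self _ _ _
  have hτ : IsCubeMorphism (fun ω : Fin (n + 1) → Bool => ω ∘ e) := by
    intro j
    exact Or.inr (Or.inr (Or.inl ⟨e j, fun ω => rfl⟩))
  have hcτ : (c ∘ fun ω : Fin (n + 1) → Bool => ω ∘ e) ∈ CS.C (n + 1) :=
    CS.C_morph _ hτ c hc
  have hc'τ : (c' ∘ fun ω : Fin (n + 1) → Bool => ω ∘ e) ∈ CS.C (n + 1) :=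
    CS.C_morph _ hτ c' hc'
  have hkey : ∀ ω : Fin n → Bool,
      (c ∘ fun ω : Fin (n + 1) → Bool => ω ∘ e) (Fin.snoc ω true) =
      (c' ∘ fun ω : Fin (n + 1) → Bool => ω ∘ e) (Fin.snoc ω false) := by
    intro ω
    have hA : (Fin.snoc ω true : Fin (n + 1) → Bool) ∘ e =
        Function.update ((Fin.snoc ω false : Fin (n + 1) → Bool) ∘ e) i true := by
      funext j
      by_cases hj : j = i
      · subst hj
        simp [Function.comp, hei, Fin.snoc_last]
      · have hje : e j ≠ Fin.last n := by
          intro h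
          exact hj (by rw [← hee j, h, hel])
        obtain ⟨k, hk⟩ := Fin.exists_castSucc_eq.mpr hje
        simp [Function.comp, Function.update_of_ne hj, ← hk, Fin.snoc_castSucc]
    have hB : (Fin.snoc ω false : Fin (n + 1) → Bool) ∘ e =
        Function.update ((Fin.snoc ω false : Fin (n + 1) → Bool) ∘ e) i false := by
      funext j
      by_cases hj : j = i
      · subst hj
        simp [Function.comp, hei, Fin.snoc_last]
      · simp [Function.update_of_ne hj]
    show c ((Fin.snoc ω true : Fin (n + 1) → Bool) ∘ e) =
      c' ((Fin.snoc ω false : Fin (n + 1) → Bool) ∘ e)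
    calc c ((Fin.snoc ω true : Fin (n + 1) → Bool) ∘ e)
        = c (Function.update ((Fin.snoc ω false : Fin (n + 1) → Bool) ∘ e) i true) := by
          rw [hA]
      _ = c' (Function.update ((Fin.snoc ω false : Fin (n + 1) → Bool) ∘ e) i false) :=
          hmatch _
      _ = c' ((Fin.snoc ω false : Fin (n + 1) → Bool) ∘ e) := by rw [← hB]
  have hg := hglue n _ _ hcτ hc'τ hkey
  have hg2 := CS.C_morph _ hτ _ hg
  refine cube_mem_of_eq CS hg2 ?_
  intro ω
  show (if (ω ∘ e) (Fin.last n) = true then (c' ∘ fun ρ : Fin (n+1) → Bool => ρ ∘ e) (ω ∘ e)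
        else (c ∘ fun ρ : Fin (n+1) → Bool => ρ ∘ e) (ω ∘ e)) = _
  have h1 : (ω ∘ e) (Fin.last n) = ω i := by simp [Function.comp, hel]
  have h2 : (ω ∘ e) ∘ e = ω := by funext j; simp [Function.comp, hee]
  show (if (ω ∘ e) (Fin.last n) = true then c' ((ω ∘ e) ∘ e) else c ((ω ∘ e) ∘ e)) = _
  rw [h1, h2]

/-- The key replacement lemma, by induction on `m`: if `g` only depends on the first
`m` coordinates, `g` takes value `a` at the top vertex, and `a ∼ b`, then replacing the
value of `g` at the top vertex by `b` yields a cube. -/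
lemma rep_aux (CS : Cubespace X) (hglue : HasGlueing CS) (s : ℕ) (a b : X)
    (hW : (fun ω : Fin (s + 1) → Bool => if ω = topVert (s + 1) then b else a) ∈ CS.C (s + 1)) :
    ∀ m : ℕ, ∀ g ∈ CS.C (s + 1),
      (∀ ω ω' : Fin (s + 1) → Bool, (∀ i : Fin (s + 1), (i : ℕ) < m → ω i = ω' i) → g ω = g ω') →
      g (topVert (s + 1)) = a →
      (fun ω => if ω = topVert (s + 1) then b else g ω) ∈ CS.C (s + 1) := by
  classical
  intro m
  induction m with
  | zero =>
    intro g hg hdep htop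
    refine cube_mem_of_eq CS hW ?_
    intro ω
    by_cases hω : ω = topVert (s + 1)
    · simp [hω]
    · simp only [if_neg hω]
      exact (htop.symm.trans (hdep (topVert (s + 1)) ω
        (fun i hi => absurd hi (Nat.not_lt_zero _)))).symm ▸ rfl
  | succ m ih =>
    intro g hg hdep htop
    by_cases hm : m < s + 1
    · set i : Fin (s + 1) := ⟨m, hm⟩ with hi
      -- the cube g with coordinate i frozen to true
      have hρ : IsCubeMorphism (fun ω : Fin (s + 1) → Bool => Function.update ω i true) := by
        intro j
        by_cases hj : j = i
        · subst hj
          exact Or.inr (Or.inl (fun ω => Function.update_self _ _ _))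
        · exact Or.inr (Or.inr (Or.inl ⟨j, fun ω => Function.update_of_ne hj _ _⟩))
      have hg' : (fun ω : Fin (s + 1) → Bool => g (Function.update ω i true)) ∈ CS.C (s + 1) :=
        CS.C_morph _ hρ g hg
      have hdep' : ∀ ω ω' : Fin (s + 1) → Bool,
          (∀ j : Fin (s + 1), (j : ℕ) < m → ω j = ω' j) →
          g (Function.update ω i true) = g (Function.update ω' i true) := by
        intro ω ω' h
        refine hdep _ _ ?_
        intro j hj
        by_cases hji : j = i
        · subst hji; simp
        · have hjm : (j : ℕ) ≠ m := fun hh => hji (Fin.ext hh)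
          have : (j : ℕ) < m := lt_of_le_of_ne (Nat.lt_succ_iff.mp hj) hjm
          rw [Function.update_of_ne hji, Function.update_of_ne hji]
          exact h j this
      have htop' : g (Function.update (topVert (s + 1)) i true) = a := by
        have : Function.update (topVert (s + 1)) i true = topVert (s + 1) := by
          funext j
          by_cases hj : j = i
          · subst hj; simp [topVert]
          · simp [Function.update_of_ne hj]
        rw [this]; exact htop
      have hc2 := ih _ hg' hdep' htop'
      have hmatch : ∀ ω : Fin (s + 1) → Bool,
          g (Function.update ω i true) =
          (fun ρ => if ρ = topVert (s + 1) then b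
            else g (Function.update ρ i true)) (Function.update ω i false) := by
        intro ω
        have hne : Function.update ω i false ≠ topVert (s + 1) := by
          intro h
          have := congrFun h i
          simp [topVert] at this
        simp only [if_neg hne, Function.update_idem]
      have hgl := glue_at CS hglue i hg hc2 hmatch
      refine cube_mem_of_eq CS hgl ?_
      intro ω
      by_cases hωi : ω i = true
      · have hupd : Function.update ω i true = ω := by
          rw [← hωi]; exact Function.update_eq_self _ _
        rw [if_pos hωi]
        show (if ω = topVert (s + 1) then b else g (Function.update ω i true)) = _
        rw [hupd]
      · have hne : ω ≠ topVert (s + 1) := by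
          intro h; exact hωi (by rw [h]; rfl)
        rw [if_neg hωi, if_neg hne]
    · -- m ≥ s + 1 : the dependence hypothesis is already as strong as needed
      refine ih g hg ?_ htop
      intro ω ω' h
      refine hdep ω ω' ?_
      intro j _
      exact h j (lt_of_lt_of_le j.isLt (not_lt.mp hm))

/-- Replacement at the top vertex. -/
lemma rep_top (CS : Cubespace X) (hglue : HasGlueing CS) (s : ℕ) (a b : X)
    (hW : (fun ω : Fin (s + 1) → Bool => if ω = topVert (s + 1) then b else a) ∈ CS.C (s + 1))
    {c : (Fin (s + 1) → Bool) → X} (hc : c ∈ CS.C (s + 1)) (hca : c (topVert (s + 1)) = a) :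
    (fun ω => if ω = topVert (s + 1) then b else c ω) ∈ CS.C (s + 1) := by
  refine rep_aux CS hglue s a b hW (s + 1) c hc ?_ hca
  intro ω ω' h
  have : ω = ω' := funext fun i => h i i.isLt
  rw [this]

/-- Replacement at an arbitrary vertex, by conjugating with coordinate flips. -/
lemma rep_at (CS : Cubespace X) (hglue : HasGlueing CS) (s : ℕ) (a b : X)
    (hW : (fun ω : Fin (s + 1) → Bool => if ω = topVert (s + 1) then b else a) ∈ CS.C (s + 1))
    (v : Fin (s + 1) → Bool) {c : (Fin (s + 1) → Bool) → X} (hc : c ∈ CS.C (s + 1))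
    (hca : c v = a) :
    (fun ω => if ω = v then b else c ω) ∈ CS.C (s + 1) := by
  classical
  set σ : (Fin (s + 1) → Bool) → (Fin (s + 1) → Bool) :=
    fun ω i => if v i = true then ω i else !(ω i) with hσdef
  have hσ : IsCubeMorphism σ := by
    intro i
    by_cases hvi : v i = true
    · exact Or.inr (Or.inr (Or.inl ⟨i, fun ω => by simp [hσdef, hvi]⟩))
    · exact Or.inr (Or.inr (Or.inr ⟨i, fun ω => by simp [hσdef, hvi]⟩))
  have hσσ : ∀ ω, σ (σ ω) = ω := by
    intro ω; funext i
    by_cases hvi : v i = true <;> simp [hσdef, hvi]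
  have hσtop : σ (topVert (s + 1)) = v := by
    funext i
    by_cases hvi : v i = true <;> simp [hσdef, hvi, topVert]
  have hσv : σ v = topVert (s + 1) := by
    funext i
    by_cases hvi : v i = true <;> simp [hσdef, hvi, topVert]
  have hcσ : (fun ω => c (σ ω)) ∈ CS.C (s + 1) := CS.C_morph _ hσ c hc
  have hcσtop : (fun ω => c (σ ω)) (topVert (s + 1)) = a := by
    simp only [hσtop]; exact hca
  have hD := rep_top CS hglue s a b hW hcσ hcσtop
  have hDσ := CS.C_morph _ hσ _ hD
  refine cube_mem_of_eq CS hDσ ?_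
  intro ω
  show (if σ ω = topVert (s + 1) then b else c (σ (σ ω))) = _
  have hiff : σ ω = topVert (s + 1) ↔ ω = v := by
    constructor
    · intro h
      rw [← hσσ ω, h, hσtop]
    · intro h
      rw [h, hσv]
  rw [hσσ]
  by_cases hω : ω = v
  · rw [if_pos (hiff.mpr hω), if_pos hω]
  · rw [if_neg (fun h => hω (hiff.mp h)), if_neg hω]

end SimEquivAux

/-- In a cubespace with the glueing property, the relation `∼_s`
(`x ∼_s y` iff the configuration which is `x` at all vertices except the top vertex and `y`
at the top vertex is an `(s+1)`-cube) is an equivalence relation. -/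
theorem sim_equivalence {X : Type*} (CS : Cubespace X) (hglue : HasGlueing CS) (s : ℕ) :
    Equivalence (fun x y : X =>
      (fun ω : Fin (s + 1) → Bool => if ω = topVert (s + 1) then y else x)
        ∈ CS.C (s + 1)) := by
  classical
  constructor
  · -- reflexivity
    intro x
    refine cube_mem_of_eq CS (const_mem_cube CS (s + 1) x) ?_
    intro ω
    simp
  · -- symmetry
    intro x y hxy
    have claim : ∀ S : Finset (Fin (s + 1) → Bool), topVert (s + 1) ∉ S →
        (fun ω => if ω ∈ S then y else x) ∈ CS.C (s + 1) := by
      intro S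
      induction S using Finset.induction_on with
      | empty =>
        intro _
        refine cube_mem_of_eq CS (const_mem_cube CS (s + 1) x) ?_
        intro ω; simp
      | insert v S hv ihS =>
        intro htop
        have hvtop : v ≠ topVert (s + 1) := by
          intro h; exact htop (h ▸ Finset.mem_insert_self v S)
        have hStop : topVert (s + 1) ∉ S := fun h => htop (Finset.mem_insert_of_mem h)
        have hcS := ihS hStop
        have hcSv : (fun ω => if ω ∈ S then y else x) v = x := by simp [hv]
        have := rep_at CS hglue s x y hxy v hcS hcSv
        refine cube_mem_of_eq CS this ?_
        intro ω
        by_cases hω : ω = v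
        · simp [hω]
        · by_cases hωS : ω ∈ S <;> simp [hω, hωS, Finset.mem_insert]
    have hfin := claim (Finset.univ.erase (topVert (s + 1))) (Finset.notMem_erase _ _)
    refine cube_mem_of_eq CS hfin ?_
    intro ω
    by_cases hω : ω = topVert (s + 1) <;> simp [hω, Finset.mem_erase]
  · -- transitivity
    intro x y z hxy hyz
    have hcy : (fun ω : Fin (s + 1) → Bool =>
        if ω = topVert (s + 1) then y else x) (topVert (s + 1)) = y := by simp
    have := rep_top CS hglue s y z hyz hxy hcy
    refine cube_mem_of_eq CS this ?_
    intro ω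
    by_cases hω : ω = topVert (s + 1) <;> simp [hω]
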